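/- Let d = 2, let 0 < r < 1 and α > 0, let g := χ_{B_r(0)} be the characteristic function of the open Euclidean ball of radius r centered at the origin in ℝ², let u := max(0, 1 − 2/(α·r))·χ_{B_r(0)}, and let z : ℝ² → ℝ² be defined by z(x) := −(r/max(r, ‖x‖)²)·min(1, α·r/2)·x. Then ‖z(x)‖ ≤ 1 for every x ∈ ℝ², and for every x ∈ ℝ² with ‖x‖ ≠ r and x ≠ 0, the map z is Fréchet differentiable at x and the trace of its derivative (i.e. the divergence of z at x) equals α·(u(x) − g(x)). -/

import Mathlib

open Classical

/-- The noisy image `g = χ_{B_r(0)}` (characteristic function of the open ball). -/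
noncomputable def roiG (r : ℝ) (x : EuclideanSpace ℝ (Fin 2)) : ℝ :=
  if ‖x‖ < r then 1 else 0

/-- The exact primal solution `u = max(0, 1 − 2/(α r)) χ_{B_r(0)}`. -/
noncomputable def roiU (r α : ℝ) (x : EuclideanSpace ℝ (Fin 2)) : ℝ :=
  max 0 (1 - 2 / (α * r)) * roiG r x

/-- The exact dual solution `z(x) = −(r / max(r,‖x‖)²) min(1, α r / 2) x`. -/
noncomputable def roiZ (r α : ℝ) (x : EuclideanSpace ℝ (Fin 2)) :
    EuclideanSpace ℝ (Fin 2) :=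
  (-(r / (max r ‖x‖) ^ 2 * min 1 (α * r / 2))) • x

lemma trace_formula (L : EuclideanSpace ℝ (Fin 2) →L[ℝ] EuclideanSpace ℝ (Fin 2)) :
    LinearMap.trace ℝ (EuclideanSpace ℝ (Fin 2)) L.toLinearMap
      = ∑ i : Fin 2, L (EuclideanSpace.single i 1) i := by
  rw [LinearMap.trace_eq_matrix_trace ℝ (EuclideanSpace.basisFun (Fin 2) ℝ).toBasis L.toLinearMap]
  simp [Matrix.trace, LinearMap.toMatrix_apply, EuclideanSpace.basisFun_apply]


/-- For the ROF benchmark example in dimension two, the dual solution satisfies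
`‖z‖ ≤ 1` everywhere and, away from the interface `‖x‖ = r` and the origin, `z`
is differentiable with `div z = α (u − g)`. -/
theorem rof_benchmark_optimality (r α : ℝ) (hr0 : 0 < r) (hr1 : r < 1)
    (hα : 0 < α) :
    (∀ x : EuclideanSpace ℝ (Fin 2), ‖roiZ r α x‖ ≤ 1) ∧
    (∀ x : EuclideanSpace ℝ (Fin 2), ‖x‖ ≠ r → x ≠ 0 →
      ∃ L : EuclideanSpace ℝ (Fin 2) →L[ℝ] EuclideanSpace ℝ (Fin 2),
        HasFDerivAt (roiZ r α) L x ∧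
        LinearMap.trace ℝ (EuclideanSpace ℝ (Fin 2)) L.toLinearMap
          = α * (roiU r α x - roiG r x)) := by
  set m : ℝ := min 1 (α * r / 2) with hm
  have hm0 : 0 < m := lt_min one_pos (by positivity)
  have hm1 : m ≤ 1 := min_le_left _ _
  constructor
  · intro x
    rw [roiZ, norm_smul]
    set M : ℝ := max r ‖x‖ with hM
    have hM0 : 0 < M := lt_max_of_lt_left hr0
    have hxM : ‖x‖ ≤ M := le_max_right _ _
    have hrM : r ≤ M := le_max_left _ _
    have habs : ‖-(r / M ^ 2 * m)‖ = r / M ^ 2 * m := by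
      rw [norm_neg, Real.norm_of_nonneg (by positivity)]
    rw [habs]
    calc r / M ^ 2 * m * ‖x‖ ≤ r / M ^ 2 * 1 * M := by
          apply mul_le_mul (mul_le_mul_of_nonneg_left hm1 (by positivity)) hxM
            (norm_nonneg _) (by positivity)
      _ = r / M := by field_simp
      _ ≤ 1 := (div_le_one hM0).2 hrM
  · intro x hxr hx0
    rcases lt_or_gt_of_ne hxr with h | h
    · -- inside: ‖x‖ < r
      set c : ℝ := -(r / r ^ 2 * m) with hc
      refine ⟨c • ContinuousLinearMap.id ℝ _, ?_, ?_⟩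
      · have hd : HasFDerivAt (fun y : EuclideanSpace ℝ (Fin 2) => c • y)
            (c • ContinuousLinearMap.id ℝ _) x := by
          exact (hasFDerivAt_id x).const_smul c
        refine hd.congr_of_eventuallyEq ?_
        have hev : ∀ᶠ y in nhds x, ‖y‖ < r := by
          have : ContinuousAt (fun y : EuclideanSpace ℝ (Fin 2) => ‖y‖) x := continuous_norm.continuousAt
          exact this.eventually_lt continuousAt_const h
        filter_upwards [hev] with y hy
        rw [roiZ, max_eq_left hy.le]
      · rw [trace_formula]
        have hcomp : ∀ i : Fin 2,
            ((c • ContinuousLinearMap.id ℝ (EuclideanSpace ℝ (Fin 2)))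
              (EuclideanSpace.single i 1)) i = c := by
          intro i
          simp [EuclideanSpace.single_apply]
        rw [Fin.sum_univ_two, hcomp 0, hcomp 1]
        have hg : roiG r x = 1 := by rw [roiG, if_pos h]
        rw [roiU, hg]
        rcases le_or_gt (α * r / 2) 1 with hle | hlt
        · have hmm : m = α * r / 2 := min_eq_right hle
          have hmax : max 0 (1 - 2 / (α * r)) = 0 := by
            apply max_eq_left
            rw [sub_nonpos]
            rw [div_le_one (by positivity)] at hle
            rw [le_div_iff₀ (by positivity)]
            linarith
          rw [hmax, hc, hmm]
          field_simp
          ring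
        · have hmm : m = 1 := min_eq_left hlt.le
          have hmax : max 0 (1 - 2 / (α * r)) = 1 - 2 / (α * r) := by
            apply max_eq_right
            rw [sub_nonneg, div_le_one (by positivity)]
            linarith
          rw [hmax, hc, hmm]
          field_simp
          ring
    · -- outside: r < ‖x‖
      have hx : ‖x‖ ≠ 0 := ne_of_gt (hr0.trans h)
      have hs : ‖x‖ ^ 2 ≠ 0 := pow_ne_zero 2 hx
      have hnorm : HasFDerivAt (fun y : EuclideanSpace ℝ (Fin 2) => ‖y‖ ^ 2)
          (2 • innerSL ℝ x) x := by
        simpa using (hasFDerivAt_id x).norm_sq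
      have hinv := (hasFDerivAt_inv hs).comp x hnorm
      have hc2 := hinv.const_mul (-(r * m))
      have hd := hc2.smul (hasFDerivAt_id x)
      refine ⟨_, hd.congr_of_eventuallyEq ?_, ?_⟩
      · have hev : ∀ᶠ y in nhds x, r < ‖y‖ :=
          ContinuousAt.eventually_lt continuousAt_const (continuous_norm.continuousAt (x := x)) h
        filter_upwards [hev] with y hy
        show roiZ r α y = (-(r * m) * (‖y‖ ^ 2)⁻¹) • y
        rw [roiZ, max_eq_right hy.le]
        congr 1
        rw [div_eq_mul_inv]
        ring
      · rw [trace_formula, Fin.sum_univ_two]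
        have hg : roiG r x = 0 := by rw [roiG, if_neg (not_lt.2 h.le)]
        have hu : roiU r α x = 0 := by rw [roiU, hg, mul_zero]
        rw [hg, hu]
        have hxx : x 0 * x 0 + x 1 * x 1 = ‖x‖ ^ 2 := by
          rw [EuclideanSpace.norm_eq, Real.sq_sqrt (by positivity), Fin.sum_univ_two]
          simp [sq]
        simp only [ContinuousLinearMap.add_apply, ContinuousLinearMap.coe_smul',
          Pi.smul_apply, ContinuousLinearMap.smulRight_apply, ContinuousLinearMap.comp_apply,
          ContinuousLinearMap.one_apply, innerSL_apply_apply, ContinuousLinearMap.id_apply,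
          smul_eq_mul, PiLp.smul_apply, EuclideanSpace.single_apply,
          Function.comp, id_eq, PiLp.add_apply, EuclideanSpace.inner_single_right,
          conj_trivial, nsmul_eq_mul, Nat.cast_ofNat, ContinuousLinearMap.toSpanSingleton_apply]
        rw [if_pos trivial]
        field_simp
        linear_combination (2 * r * m) * hxx
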